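/- Let t ∈ ℝ^m be nonzero, s ∈ ℝ^n be nonzero, α, β > 0, c₁ = √(β²/α² + 1/‖s‖₂²), c₂ = c₁ + 1/‖s‖₂, and define the (m+n)×(m+n) block matrix M = [[c₁I_m - c₂ t tᵀ/‖t‖₂², (β/α) t sᵀ/(‖t‖₂‖s‖₂)],[0, I_n]]. Then MMᵀ = [[(β²/α² + 1/‖s‖₂²)I_m, 0],[0, I_n]] + (β/α)[[0, tsᵀ/(‖t‖₂‖s‖₂)],[stᵀ/(‖t‖₂‖s‖₂), 0]], and consequently ‖M‖₂² ≤ max{1, β²/α² + 1/‖s‖₂²} + β/α. -/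

import Mathlib

open Matrix
open scoped Matrix.Norms.L2Operator

/-- Spectral norm of a real matrix: the operator norm of the induced map between
Euclidean spaces. -/
noncomputable def specNorm {m n : Type*} [Fintype m] [Fintype n] [DecidableEq n]
    (M : Matrix m n ℝ) : ℝ :=
  ‖LinearMap.toContinuousLinearMap (Matrix.toEuclideanLin M)‖

lemma my_transpose_vecMulVec {m n : Type*} (a : m → ℝ) (b : n → ℝ) :
    (vecMulVec a b)ᵀ = vecMulVec b a := by
  ext i j; simp [vecMulVec_apply, mul_comm]

lemma my_vecMulVec_mul {k m n : Type*} [Fintype k] (a : m → ℝ) (b c : k → ℝ) (d : n → ℝ) :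
    vecMulVec a b * vecMulVec c d = (b ⬝ᵥ c) • vecMulVec a d := by
  ext i j
  simp only [Matrix.mul_apply, vecMulVec_apply, dotProduct, Matrix.smul_apply, smul_eq_mul,
    Finset.sum_mul, Finset.mul_sum]
  refine Finset.sum_congr rfl fun x _ => by ring

lemma euclidean_norm_le_of_sq {ι κ : Type*} [Fintype ι] [Fintype κ]
    (x : EuclideanSpace ℝ ι) (y : EuclideanSpace ℝ κ) (C : ℝ)
    (hC : 0 ≤ C) (h : ∑ i, (y i) ^ 2 ≤ C ^ 2 * ∑ i, (x i) ^ 2) : ‖y‖ ≤ C * ‖x‖ := by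
  rw [EuclideanSpace.norm_eq, EuclideanSpace.norm_eq]
  simp only [Real.norm_eq_abs, sq_abs]
  calc Real.sqrt (∑ i, (y i) ^ 2) ≤ Real.sqrt (C ^ 2 * ∑ i, (x i) ^ 2) := Real.sqrt_le_sqrt h
    _ = C * Real.sqrt (∑ i, (x i) ^ 2) := by
        rw [Real.sqrt_mul (sq_nonneg _), Real.sqrt_sq hC]

lemma specNorm_le_of_sq {m n : Type*} [Fintype m] [Fintype n] [DecidableEq n]
    (M : Matrix m n ℝ) (C : ℝ) (hC : 0 ≤ C)
    (h : ∀ y : n → ℝ, ∑ i, (M *ᵥ y) i ^ 2 ≤ C ^ 2 * ∑ i, y i ^ 2) : specNorm M ≤ C := by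
  refine ContinuousLinearMap.opNorm_le_bound _ hC fun x => ?_
  have hx : (LinearMap.toContinuousLinearMap (Matrix.toEuclideanLin M)) x
      = (WithLp.equiv 2 (m → ℝ)).symm (M *ᵥ (WithLp.equiv 2 (n → ℝ)) x) := rfl
  rw [hx]
  exact euclidean_norm_le_of_sq x _ C hC (h ((WithLp.equiv 2 (n → ℝ)) x))

lemma diag_block_specNorm_le (m n : ℕ) (d : ℝ) (hd : 0 ≤ d) :
    specNorm (fromBlocks (d • (1 : Matrix (Fin m) (Fin m) ℝ)) 0 0
      (1 : Matrix (Fin n) (Fin n) ℝ)) ≤ max 1 d := by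
  have hmax : (0:ℝ) ≤ max 1 d := le_max_of_le_left zero_le_one
  refine specNorm_le_of_sq _ _ hmax fun y => ?_
  have hmv : ∀ i, (fromBlocks (d • (1 : Matrix (Fin m) (Fin m) ℝ)) 0 0
      (1 : Matrix (Fin n) (Fin n) ℝ) *ᵥ y) i =
      Sum.elim (fun i => d * y (Sum.inl i)) (fun j => y (Sum.inr j)) i := by
    intro i
    cases i with
    | inl i =>
        simp [mulVec, dotProduct, Fintype.sum_sum_type, Matrix.one_apply, mul_ite,
          Finset.sum_ite_eq, Finset.mul_sum]
    | inr j =>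
        simp [mulVec, dotProduct, Fintype.sum_sum_type, Matrix.one_apply, mul_ite,
          Finset.sum_ite_eq, Finset.mul_sum]
  simp only [hmv]
  rw [Fintype.sum_sum_type, Fintype.sum_sum_type]
  simp only [Sum.elim_inl, Sum.elim_inr]
  calc (∑ i, (d * y (Sum.inl i)) ^ 2) + ∑ j, (y (Sum.inr j)) ^ 2
      ≤ (∑ i, (max 1 d) ^ 2 * y (Sum.inl i) ^ 2) + ∑ j, (max 1 d) ^ 2 * y (Sum.inr j) ^ 2 := by
        gcongr (?_ : ℝ) + ?_ <;> refine Finset.sum_le_sum fun i _ => ?_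
        · have h1 : d ^ 2 ≤ (max 1 d) ^ 2 := by nlinarith [le_max_right 1 d]
          rw [mul_pow]
          exact mul_le_mul_of_nonneg_right h1 (sq_nonneg _)
        · have h1 : (1:ℝ) ≤ (max 1 d) ^ 2 := by nlinarith [le_max_left 1 d]
          nlinarith [sq_nonneg (y (Sum.inr i))]
    _ = (max 1 d) ^ 2 * ((∑ i, y (Sum.inl i) ^ 2) + ∑ j, y (Sum.inr j) ^ 2) := by
        rw [← Finset.mul_sum, ← Finset.mul_sum, ← mul_add]

lemma offdiag_block_specNorm_le (m n : ℕ) (t : Fin m → ℝ) (s : Fin n → ℝ) (nt ns : ℝ)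
    (hnt0 : 0 < nt) (hns0 : 0 < ns)
    (hnt2 : nt ^ 2 = ∑ i, t i ^ 2) (hns2 : ns ^ 2 = ∑ i, s i ^ 2) :
    specNorm (fromBlocks (0 : Matrix (Fin m) (Fin m) ℝ)
      ((1 / (nt * ns)) • vecMulVec t s) ((1 / (nt * ns)) • vecMulVec s t)
      (0 : Matrix (Fin n) (Fin n) ℝ)) ≤ 1 := by
  refine specNorm_le_of_sq _ _ zero_le_one fun y => ?_
  set c : ℝ := 1 / (nt * ns) with hc
  have hmv : ∀ i, (fromBlocks (0 : Matrix (Fin m) (Fin m) ℝ)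
      (c • vecMulVec t s) (c • vecMulVec s t) (0 : Matrix (Fin n) (Fin n) ℝ) *ᵥ y) i =
      Sum.elim (fun i => c * (∑ j, s j * y (Sum.inr j)) * t i)
        (fun j => c * (∑ i, t i * y (Sum.inl i)) * s j) i := by
    intro i
    cases i with
    | inl i =>
        simp only [mulVec, dotProduct, Fintype.sum_sum_type, Sum.elim_inl,
          fromBlocks_apply₁₁, fromBlocks_apply₁₂, Matrix.zero_apply, zero_mul,
          Finset.sum_const_zero, Matrix.smul_apply, vecMulVec_apply, smul_eq_mul, zero_add,
          Finset.mul_sum, Finset.sum_mul]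
        refine Finset.sum_congr rfl fun j _ => by ring
    | inr j =>
        simp only [mulVec, dotProduct, Fintype.sum_sum_type, Sum.elim_inr,
          fromBlocks_apply₂₁, fromBlocks_apply₂₂, Matrix.zero_apply, zero_mul,
          Finset.sum_const_zero, Matrix.smul_apply, vecMulVec_apply, smul_eq_mul, add_zero,
          Finset.mul_sum, Finset.sum_mul]
        refine Finset.sum_congr rfl fun i _ => by ring
  simp only [hmv]
  rw [Fintype.sum_sum_type, Fintype.sum_sum_type]
  simp only [Sum.elim_inl, Sum.elim_inr, one_pow, one_mul]
  have hCS2 : (∑ j, s j * y (Sum.inr j)) ^ 2 ≤ ns ^ 2 * ∑ j, y (Sum.inr j) ^ 2 := by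
    rw [hns2]
    exact Finset.sum_mul_sq_le_sq_mul_sq _ _ _
  have hCS1 : (∑ i, t i * y (Sum.inl i)) ^ 2 ≤ nt ^ 2 * ∑ i, y (Sum.inl i) ^ 2 := by
    rw [hnt2]
    exact Finset.sum_mul_sq_le_sq_mul_sq _ _ _
  have e1 : (∑ i, (c * (∑ j, s j * y (Sum.inr j)) * t i) ^ 2)
      = c ^ 2 * (∑ j, s j * y (Sum.inr j)) ^ 2 * nt ^ 2 := by
    conv_rhs => rw [hnt2, Finset.mul_sum]
    refine Finset.sum_congr rfl fun i _ => by ring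
  have e2 : (∑ j, (c * (∑ i, t i * y (Sum.inl i)) * s j) ^ 2)
      = c ^ 2 * (∑ i, t i * y (Sum.inl i)) ^ 2 * ns ^ 2 := by
    conv_rhs => rw [hns2, Finset.mul_sum]
    refine Finset.sum_congr rfl fun j _ => by ring
  rw [e1, e2]
  have hc2 : c ^ 2 * nt ^ 2 * ns ^ 2 = 1 := by
    rw [hc]; field_simp
  have b1 : c ^ 2 * (∑ j, s j * y (Sum.inr j)) ^ 2 * nt ^ 2 ≤ ∑ j, y (Sum.inr j) ^ 2 := by
    have h := mul_le_mul_of_nonneg_left hCS2 (mul_nonneg (sq_nonneg c) (sq_nonneg nt))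
    calc c ^ 2 * (∑ j, s j * y (Sum.inr j)) ^ 2 * nt ^ 2
        = c ^ 2 * nt ^ 2 * (∑ j, s j * y (Sum.inr j)) ^ 2 := by ring
      _ ≤ c ^ 2 * nt ^ 2 * (ns ^ 2 * ∑ j, y (Sum.inr j) ^ 2) := h
      _ = (c ^ 2 * nt ^ 2 * ns ^ 2) * ∑ j, y (Sum.inr j) ^ 2 := by ring
      _ = ∑ j, y (Sum.inr j) ^ 2 := by rw [hc2, one_mul]
  have b2 : c ^ 2 * (∑ i, t i * y (Sum.inl i)) ^ 2 * ns ^ 2 ≤ ∑ i, y (Sum.inl i) ^ 2 := by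
    have h := mul_le_mul_of_nonneg_left hCS1 (mul_nonneg (sq_nonneg c) (sq_nonneg ns))
    calc c ^ 2 * (∑ i, t i * y (Sum.inl i)) ^ 2 * ns ^ 2
        = c ^ 2 * ns ^ 2 * (∑ i, t i * y (Sum.inl i)) ^ 2 := by ring
      _ ≤ c ^ 2 * ns ^ 2 * (nt ^ 2 * ∑ i, y (Sum.inl i) ^ 2) := h
      _ = (c ^ 2 * nt ^ 2 * ns ^ 2) * ∑ i, y (Sum.inl i) ^ 2 := by ring
      _ = ∑ i, y (Sum.inl i) ^ 2 := by rw [hc2, one_mul]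
  linarith [b1, b2]

/-- For nonzero `t, s` and `α, β > 0`, with `c₁ = √(β²/α² + 1/‖s‖₂²)`,
`c₂ = c₁ + 1/‖s‖₂`, the block matrix
`M = [[c₁I - c₂ttᵀ/‖t‖₂², (β/α)tsᵀ/(‖t‖₂‖s‖₂)],[0, I]]` satisfies
`MMᵀ = [[(β²/α² + 1/‖s‖₂²)I, 0],[0, I]] + (β/α)[[0, tsᵀ/(‖t‖₂‖s‖₂)],[stᵀ/(‖t‖₂‖s‖₂), 0]]`
and hence `‖M‖₂² ≤ max{1, β²/α² + 1/‖s‖₂²} + β/α`. -/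
theorem block_matrix_norm_bound (m n : ℕ)
    (t : Fin m → ℝ) (s : Fin n → ℝ) (ht : t ≠ 0) (hs : s ≠ 0)
    (α β : ℝ) (hα : 0 < α) (hβ : 0 < β)
    (nt ns c₁ c₂ : ℝ)
    (hnt : nt = Real.sqrt (∑ i, t i ^ 2)) (hns : ns = Real.sqrt (∑ i, s i ^ 2))
    (hc₁ : c₁ = Real.sqrt (β ^ 2 / α ^ 2 + 1 / ns ^ 2)) (hc₂ : c₂ = c₁ + 1 / ns) :
    (fromBlocks (c₁ • (1 : Matrix (Fin m) (Fin m) ℝ) - (c₂ / nt ^ 2) • vecMulVec t t)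
          ((β / (α * nt * ns)) • vecMulVec t s)
          (0 : Matrix (Fin n) (Fin m) ℝ) (1 : Matrix (Fin n) (Fin n) ℝ)) *
        (fromBlocks (c₁ • (1 : Matrix (Fin m) (Fin m) ℝ) - (c₂ / nt ^ 2) • vecMulVec t t)
          ((β / (α * nt * ns)) • vecMulVec t s)
          (0 : Matrix (Fin n) (Fin m) ℝ) (1 : Matrix (Fin n) (Fin n) ℝ))ᵀ =
      fromBlocks ((β ^ 2 / α ^ 2 + 1 / ns ^ 2) • (1 : Matrix (Fin m) (Fin m) ℝ)) 0 0
          (1 : Matrix (Fin n) (Fin n) ℝ) +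
        (β / α) • fromBlocks (0 : Matrix (Fin m) (Fin m) ℝ)
          ((1 / (nt * ns)) • vecMulVec t s) ((1 / (nt * ns)) • vecMulVec s t)
          (0 : Matrix (Fin n) (Fin n) ℝ) ∧
    specNorm (fromBlocks (c₁ • (1 : Matrix (Fin m) (Fin m) ℝ) - (c₂ / nt ^ 2) • vecMulVec t t)
          ((β / (α * nt * ns)) • vecMulVec t s)
          (0 : Matrix (Fin n) (Fin m) ℝ) (1 : Matrix (Fin n) (Fin n) ℝ)) ^ 2 ≤
      max 1 (β ^ 2 / α ^ 2 + 1 / ns ^ 2) + β / α := by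
  -- scalar facts
  have hT : 0 < ∑ i, t i ^ 2 := by
    obtain ⟨i, hi⟩ := Function.ne_iff.mp ht
    refine Finset.sum_pos' (fun j _ => sq_nonneg _) ⟨i, Finset.mem_univ i, ?_⟩
    simp only [Pi.zero_apply] at hi
    positivity
  have hS : 0 < ∑ i, s i ^ 2 := by
    obtain ⟨i, hi⟩ := Function.ne_iff.mp hs
    refine Finset.sum_pos' (fun j _ => sq_nonneg _) ⟨i, Finset.mem_univ i, ?_⟩
    simp only [Pi.zero_apply] at hi
    positivity
  have hnt0 : 0 < nt := hnt ▸ Real.sqrt_pos.mpr hT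
  have hns0 : 0 < ns := hns ▸ Real.sqrt_pos.mpr hS
  have hnt2 : nt ^ 2 = ∑ i, t i ^ 2 := by rw [hnt, Real.sq_sqrt hT.le]
  have hns2 : ns ^ 2 = ∑ i, s i ^ 2 := by rw [hns, Real.sq_sqrt hS.le]
  have hc₁sq : c₁ ^ 2 = β ^ 2 / α ^ 2 + 1 / ns ^ 2 := by
    rw [hc₁, Real.sq_sqrt (by positivity)]
  have hTest : t ⬝ᵥ t = nt ^ 2 := by
    rw [hnt2]; simp [dotProduct, sq]
  have hSest : s ⬝ᵥ s = ns ^ 2 := by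
    rw [hns2]; simp [dotProduct, sq]
  have hMM :
    (fromBlocks (c₁ • (1 : Matrix (Fin m) (Fin m) ℝ) - (c₂ / nt ^ 2) • vecMulVec t t)
          ((β / (α * nt * ns)) • vecMulVec t s)
          (0 : Matrix (Fin n) (Fin m) ℝ) (1 : Matrix (Fin n) (Fin n) ℝ)) *
        (fromBlocks (c₁ • (1 : Matrix (Fin m) (Fin m) ℝ) - (c₂ / nt ^ 2) • vecMulVec t t)
          ((β / (α * nt * ns)) • vecMulVec t s)
          (0 : Matrix (Fin n) (Fin m) ℝ) (1 : Matrix (Fin n) (Fin n) ℝ))ᵀ =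
      fromBlocks ((β ^ 2 / α ^ 2 + 1 / ns ^ 2) • (1 : Matrix (Fin m) (Fin m) ℝ)) 0 0
          (1 : Matrix (Fin n) (Fin n) ℝ) +
        (β / α) • fromBlocks (0 : Matrix (Fin m) (Fin m) ℝ)
          ((1 / (nt * ns)) • vecMulVec t s) ((1 / (nt * ns)) • vecMulVec s t)
          (0 : Matrix (Fin n) (Fin n) ℝ) := by
    rw [fromBlocks_transpose, fromBlocks_multiply]
    conv_rhs => rw [Matrix.fromBlocks_smul, fromBlocks_add]
    rw [fromBlocks_inj]
    have hnt0' := hnt0.ne'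
    have hns0' := hns0.ne'
    have hα' := hα.ne'
    refine ⟨?_, ?_, ?_, ?_⟩ <;>
      simp only [transpose_sub, transpose_smul, transpose_one, transpose_zero,
        my_transpose_vecMulVec, Matrix.mul_zero, Matrix.zero_mul, Matrix.mul_one, Matrix.one_mul,
        zero_add, add_zero, smul_zero]
    · -- top-left
      rw [sub_mul, mul_sub, mul_sub]
      simp only [Matrix.smul_mul, Matrix.mul_smul, my_vecMulVec_mul, hTest, hSest,
        Matrix.one_mul, Matrix.mul_one, smul_smul, smul_zero, add_zero]
      rw [hc₂]
      match_scalars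
      · linear_combination hc₁sq
      · have hkey : c₁ ^ 2 * (α ^ 2 * ns ^ 2) = β ^ 2 * ns ^ 2 + α ^ 2 := by
          rw [hc₁sq]; field_simp
        field_simp
        linear_combination (-1 : ℝ) * hkey
    · -- top-right
      rw [smul_smul]
      congr 1
      field_simp
      try (left; ring)
    · -- bottom-left
      rw [smul_smul]
      congr 1
      field_simp
      try (left; ring)
  refine ⟨hMM, ?_⟩
  have hd : (0:ℝ) ≤ β ^ 2 / α ^ 2 + 1 / ns ^ 2 := by positivity
  have hr : (0:ℝ) ≤ β / α := le_of_lt (div_pos hβ hα)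
  have hD := diag_block_specNorm_le m n (β ^ 2 / α ^ 2 + 1 / ns ^ 2) hd
  have hN := offdiag_block_specNorm_le m n t s nt ns hnt0 hns0 hnt2 hns2
  set M := fromBlocks (c₁ • (1 : Matrix (Fin m) (Fin m) ℝ) - (c₂ / nt ^ 2) • vecMulVec t t)
      ((β / (α * nt * ns)) • vecMulVec t s)
      (0 : Matrix (Fin n) (Fin m) ℝ) (1 : Matrix (Fin n) (Fin n) ℝ) with hMdef
  have h1 : ∀ X : Matrix (Fin m ⊕ Fin n) (Fin m ⊕ Fin n) ℝ, specNorm X = ‖X‖ := fun _ => rfl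
  have h3 := Matrix.l2_opNorm_conjTranspose_mul_self (Mᵀ)
  rw [conjTranspose_eq_transpose_of_trivial, transpose_transpose] at h3
  have h4 : ‖Mᵀ‖ = ‖M‖ := by
    rw [← Matrix.l2_opNorm_conjTranspose Mᵀ, conjTranspose_eq_transpose_of_trivial,
      transpose_transpose]
  rw [h1] at hD hN ⊢
  calc ‖M‖ ^ 2 = ‖M * Mᵀ‖ := by rw [h3, h4, sq]
    _ = ‖fromBlocks ((β ^ 2 / α ^ 2 + 1 / ns ^ 2) • (1 : Matrix (Fin m) (Fin m) ℝ)) 0 0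
          (1 : Matrix (Fin n) (Fin n) ℝ) +
        (β / α) • fromBlocks (0 : Matrix (Fin m) (Fin m) ℝ)
          ((1 / (nt * ns)) • vecMulVec t s) ((1 / (nt * ns)) • vecMulVec s t)
          (0 : Matrix (Fin n) (Fin n) ℝ)‖ := by rw [hMM]
    _ ≤ ‖fromBlocks ((β ^ 2 / α ^ 2 + 1 / ns ^ 2) • (1 : Matrix (Fin m) (Fin m) ℝ)) 0 0
          (1 : Matrix (Fin n) (Fin n) ℝ)‖ +
        ‖(β / α) • fromBlocks (0 : Matrix (Fin m) (Fin m) ℝ)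
          ((1 / (nt * ns)) • vecMulVec t s) ((1 / (nt * ns)) • vecMulVec s t)
          (0 : Matrix (Fin n) (Fin n) ℝ)‖ := norm_add_le _ _
    _ = ‖fromBlocks ((β ^ 2 / α ^ 2 + 1 / ns ^ 2) • (1 : Matrix (Fin m) (Fin m) ℝ)) 0 0
          (1 : Matrix (Fin n) (Fin n) ℝ)‖ +
        (β / α) * ‖fromBlocks (0 : Matrix (Fin m) (Fin m) ℝ)
          ((1 / (nt * ns)) • vecMulVec t s) ((1 / (nt * ns)) • vecMulVec s t)
          (0 : Matrix (Fin n) (Fin n) ℝ)‖ := by rw [norm_smul, Real.norm_of_nonneg hr]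
    _ ≤ max 1 (β ^ 2 / α ^ 2 + 1 / ns ^ 2) + (β / α) * 1 := by gcongr
    _ = max 1 (β ^ 2 / α ^ 2 + 1 / ns ^ 2) + β / α := by rw [mul_one]
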